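/- arXiv:2007.06491 — 2 statements merged into one kernel-verified Lean document; each statement's English description precedes it below -/
import Mathlib

section
/- With Ψ^PAM as above, dΨ^PAM/dσ² = 1 − 1/M − (nonnegative terms), each of which vanishes as σ² → 0; hence sup_{σ² > 0} dΨ^PAM(σ²)/dσ² = 1 − 1/M and the minimum recovery threshold is β^min = (1 − 1/M)^{-1} = M/(M−1). -/
open MeasureTheory ProbabilityTheory Set

/-- Standard Gaussian tail function `Q(x) = P(Z > x)`. -/
noncomputable def gaussQ (x : ℝ) : ℝ := ((gaussianReal 0 1) (Set.Ioi x)).toReal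

/-- The state-evolution MSE `Ψ^PAM` of the clipping denoiser for `M`-PAM,
as a function of the noise variance `v = σ²` (with `σ = √v`). -/
noncomputable def PsiPAM (M : ℕ) (v : ℝ) : ℝ :=
  (2 / (M:ℝ)) * ∑ k ∈ Finset.Icc 1 (M / 2),
    (v + (((M:ℝ) - 1 - (2 * (k:ℝ) - 1))^2 - v) *
            gaussQ (((M:ℝ) - 1 - (2 * (k:ℝ) - 1)) / Real.sqrt v)
       + (((M:ℝ) - 1 + (2 * (k:ℝ) - 1))^2 - v) *
            gaussQ (((M:ℝ) - 1 + (2 * (k:ℝ) - 1)) / Real.sqrt v)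
       - (Real.sqrt v / Real.sqrt (2 * Real.pi)) *
           (((M:ℝ) - 1 - (2 * (k:ℝ) - 1)) *
              Real.exp (-((M:ℝ) - 1 - (2 * (k:ℝ) - 1))^2 / (2 * v))
            + ((M:ℝ) - 1 + (2 * (k:ℝ) - 1)) *
              Real.exp (-((M:ℝ) - 1 + (2 * (k:ℝ) - 1))^2 / (2 * v))))

open Filter Topology

/-! ### The standard normal pdf and basic facts about `gaussQ` -/

/-- The standard normal pdf. -/
noncomputable def phiG (x : ℝ) : ℝ := (Real.sqrt (2 * Real.pi))⁻¹ * Real.exp (-x^2/2)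

lemma phiG_eq (x : ℝ) : gaussianPDFReal 0 1 x = phiG x := by
  simp [gaussianPDFReal, phiG, neg_div]

lemma phiG_def (x : ℝ) : phiG x = (Real.sqrt (2 * Real.pi))⁻¹ * Real.exp (-x^2/2) := rfl

lemma phiG_pos (x : ℝ) : 0 < phiG x := by
  apply mul_pos (inv_pos.2 (Real.sqrt_pos.2 (by positivity))) (Real.exp_pos _)

lemma continuous_phiG : Continuous phiG := by
  unfold phiG; fun_prop

lemma integrable_phiG : Integrable phiG := by
  have := integrable_gaussianPDFReal 0 1
  simpa [funext phiG_eq] using this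

lemma gaussQ_eq (x : ℝ) : gaussQ x = ∫ t in Ioi x, phiG t := by
  rw [gaussQ, gaussianReal_apply_eq_integral 0 one_ne_zero,
    ENNReal.toReal_ofReal (integral_nonneg fun t => (phiG_eq t ▸ gaussianPDFReal_nonneg 0 1 t))]
  simp_rw [funext phiG_eq]

lemma gaussQ_nonneg (x : ℝ) : 0 ≤ gaussQ x := ENNReal.toReal_nonneg

lemma integral_phiG : ∫ t, phiG t = 1 := by
  simpa [funext phiG_eq] using integral_gaussianPDFReal_eq_one 0 one_ne_zero

lemma gaussQ_eq' (x : ℝ) : gaussQ x = 1 - ∫ t in Iic x, phiG t := by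
  rw [gaussQ_eq, eq_sub_iff_add_eq, add_comm,
    intervalIntegral.integral_Iic_add_Ioi integrable_phiG.integrableOn
      integrable_phiG.integrableOn, integral_phiG]

lemma gaussQ_zero : gaussQ 0 = 1/2 := by
  have h1 : ∫ t in Iic (0:ℝ), phiG t = ∫ t in Ioi (0:ℝ), phiG t := by
    have := integral_comp_neg_Iic (0:ℝ) phiG
    rw [neg_zero] at this
    rw [← this]
    congr 1; ext t; simp [phiG, neg_div]
  have h2 := intervalIntegral.integral_Iic_add_Ioi (b := (0:ℝ))
    integrable_phiG.integrableOn integrable_phiG.integrableOn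
  rw [integral_phiG, h1] at h2
  rw [gaussQ_eq]
  linarith

lemma hasDerivAt_gaussQ (x : ℝ) : HasDerivAt gaussQ (-(phiG x)) x := by
  have key : gaussQ = fun x => gaussQ 0 - ∫ t in (0:ℝ)..x, phiG t := by
    funext y
    rw [gaussQ_eq', gaussQ_eq',
      ← intervalIntegral.integral_Iic_sub_Iic integrable_phiG.integrableOn
        integrable_phiG.integrableOn]
    ring
  rw [key]
  have : HasDerivAt (fun u => ∫ t in (0:ℝ)..u, phiG t) (phiG x) x :=
    intervalIntegral.integral_hasDerivAt_right
      (integrable_phiG.intervalIntegrable)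
      (continuous_phiG.stronglyMeasurable.stronglyMeasurableAtFilter)
      continuous_phiG.continuousAt
  exact ((hasDerivAt_const x (gaussQ 0)).sub this).congr_deriv (by ring)

lemma tendsto_gaussQ_atTop : Tendsto gaussQ atTop (𝓝 0) := by
  have h : ∀ x, gaussQ x = 1 - cdf (gaussianReal 0 1) x := by
    intro x
    rw [gaussQ_eq', cdf_eq_real, measureReal_def,
      gaussianReal_apply_eq_integral 0 one_ne_zero,
      ENNReal.toReal_ofReal (integral_nonneg fun t => gaussianPDFReal_nonneg 0 1 t)]
    simp_rw [funext phiG_eq]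
  simp_rw [funext h]
  simpa using (tendsto_const_nhds (x := (1:ℝ))).sub (tendsto_cdf_atTop (gaussianReal 0 1))

/-! ### The function `rQ` and its properties -/

/-- `rQ a v = Q(a/√v) + (a/√v) φ(a/√v)`, the nonnegative part subtracted in the
derivative of each summand of `Ψ^PAM`. -/
noncomputable def rQ (a v : ℝ) : ℝ :=
  gaussQ (a / Real.sqrt v) + (a / Real.sqrt v) * phiG (a / Real.sqrt v)

lemma rQ_nonneg {a : ℝ} (ha : 0 ≤ a) (v : ℝ) : 0 ≤ rQ a v :=
  add_nonneg (gaussQ_nonneg _)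
    (mul_nonneg (div_nonneg ha (Real.sqrt_nonneg v)) (phiG_pos _).le)

lemma rQ_zero (v : ℝ) : rQ 0 v = 1/2 := by
  simp [rQ, gaussQ_zero]

lemma tendsto_mul_phiG : Tendsto (fun x => x * phiG x) atTop (𝓝 0) := by
  have key : Tendsto (fun x : ℝ => x * Real.exp (-x^2/2)) atTop (𝓝 0) := by
    have hb : Tendsto (fun x : ℝ => x * Real.exp (-x)) atTop (𝓝 0) := by
      simpa using Real.tendsto_pow_mul_exp_neg_atTop_nhds_zero 1
    refine squeeze_zero' ?_ ?_ hb
    · filter_upwards [eventually_ge_atTop (0:ℝ)] with x hx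
      positivity
    · filter_upwards [eventually_ge_atTop (2:ℝ)] with x hx
      have : -x^2/2 ≤ -x := by nlinarith
      exact mul_le_mul_of_nonneg_left (Real.exp_le_exp.2 this) (by linarith)
  have : Tendsto (fun x : ℝ => (Real.sqrt (2 * Real.pi))⁻¹ * (x * Real.exp (-x^2/2)))
      atTop (𝓝 ((Real.sqrt (2 * Real.pi))⁻¹ * 0)) := key.const_mul _
  simp only [mul_zero] at this
  apply this.congr
  intro x
  rw [phiG_def]
  ring

lemma tendsto_rQ {a : ℝ} (ha : 0 < a) : Tendsto (fun v => rQ a v) (𝓝[>](0:ℝ)) (𝓝 0) := by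
  have hsqrt : Tendsto Real.sqrt (𝓝[>](0:ℝ)) (𝓝[>](0:ℝ)) := by
    apply tendsto_nhdsWithin_of_tendsto_nhds_of_eventually_within
    · have h0 : Tendsto Real.sqrt (𝓝 0) (𝓝 0) := by
        simpa using Real.continuous_sqrt.tendsto 0
      exact h0.mono_left nhdsWithin_le_nhds
    · filter_upwards [self_mem_nhdsWithin] with v hv
      exact Real.sqrt_pos.2 hv
  have harg : Tendsto (fun v => a / Real.sqrt v) (𝓝[>](0:ℝ)) atTop := by
    simp_rw [div_eq_mul_inv]
    exact (tendsto_inv_nhdsGT_zero.comp hsqrt).const_mul_atTop ha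
  have hQ := tendsto_gaussQ_atTop.comp harg
  have hP := tendsto_mul_phiG.comp harg
  simpa [rQ, Function.comp] using hQ.add hP

/-! ### Derivative computations -/

lemma hasDerivAt_inner (a : ℝ) {v : ℝ} (hv : 0 < v) :
    HasDerivAt (fun v => a / Real.sqrt v) (-(a / (2 * v * Real.sqrt v))) v := by
  have hs : Real.sqrt v ≠ 0 := (Real.sqrt_pos.2 hv).ne'
  have h1 : HasDerivAt (fun v : ℝ => Real.sqrt v) (1 / (2 * Real.sqrt v)) v :=
    Real.hasDerivAt_sqrt hv.ne'
  have h2 := (h1.inv hs).const_mul a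
  have hfe : (fun v : ℝ => a / Real.sqrt v) = fun v => a * (Real.sqrt v)⁻¹ := by
    funext w; rw [div_eq_mul_inv]
  rw [hfe]
  refine h2.congr_deriv ?_
  rw [Real.sq_sqrt hv.le]
  field_simp
  try ring
  try tauto

lemma hasDerivAt_Qcomp (a : ℝ) {v : ℝ} (hv : 0 < v) :
    HasDerivAt (fun v => gaussQ (a / Real.sqrt v))
      (phiG (a / Real.sqrt v) * (a / (2 * v * Real.sqrt v))) v := by
  have := (hasDerivAt_gaussQ (a / Real.sqrt v)).comp v (hasDerivAt_inner a hv)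
  refine this.congr_deriv ?_
  ring

lemma hasDerivAt_expterm (a : ℝ) {v : ℝ} (hv : 0 < v) :
    HasDerivAt (fun v => Real.exp (-a^2/(2*v)))
      (Real.exp (-a^2/(2*v)) * (a^2/(2*v^2))) v := by
  have h1 : HasDerivAt (fun v : ℝ => -a^2/(2*v)) (a^2/(2*v^2)) v := by
    have h2 : HasDerivAt (fun v : ℝ => 2*v) 2 v := by
      simpa using (hasDerivAt_id v).const_mul 2
    have h3 := (h2.inv (by positivity)).const_mul (-a^2)
    have hfe : (fun v : ℝ => -a^2/(2*v)) = fun v => -a^2 * (2*v)⁻¹ := by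
      funext w; rw [div_eq_mul_inv]
    rw [hfe]
    refine h3.congr_deriv ?_
    field_simp
    try ring
    try tauto
  exact h1.exp

lemma hasDerivAt_bracket (a b : ℝ) {v : ℝ} (hv : 0 < v) :
    HasDerivAt (fun v => v + (a^2 - v) * gaussQ (a / Real.sqrt v)
        + (b^2 - v) * gaussQ (b / Real.sqrt v)
        - (Real.sqrt v / Real.sqrt (2 * Real.pi)) *
            (a * Real.exp (-a^2/(2*v)) + b * Real.exp (-b^2/(2*v))))
      (1 - rQ a v - rQ b v) v := by
  simp only [rQ]
  obtain ⟨s, hs, rfl⟩ : ∃ s : ℝ, 0 < s ∧ v = s^2 :=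
    ⟨Real.sqrt v, Real.sqrt_pos.2 hv, (Real.sq_sqrt hv.le).symm⟩
  have hss : Real.sqrt (s^2) = s := Real.sqrt_sq hs.le
  have hTa : HasDerivAt (fun v => (a^2 - v) * gaussQ (a / Real.sqrt v))
      ((-1) * gaussQ (a / Real.sqrt (s^2)) + (a^2 - s^2) *
        (phiG (a / Real.sqrt (s^2)) * (a / (2 * s^2 * Real.sqrt (s^2))))) (s^2) :=
    (((hasDerivAt_id (s^2)).const_sub (a^2))).mul (hasDerivAt_Qcomp a hv)
  have hTb : HasDerivAt (fun v => (b^2 - v) * gaussQ (b / Real.sqrt v))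
      ((-1) * gaussQ (b / Real.sqrt (s^2)) + (b^2 - s^2) *
        (phiG (b / Real.sqrt (s^2)) * (b / (2 * s^2 * Real.sqrt (s^2))))) (s^2) :=
    (((hasDerivAt_id (s^2)).const_sub (b^2))).mul (hasDerivAt_Qcomp b hv)
  have hE : HasDerivAt (fun v => (Real.sqrt v / Real.sqrt (2 * Real.pi)) *
        (a * Real.exp (-a^2/(2*v)) + b * Real.exp (-b^2/(2*v))))
      ((1 / (2 * Real.sqrt (s^2)) / Real.sqrt (2 * Real.pi)) *
          (a * Real.exp (-a^2/(2*s^2)) + b * Real.exp (-b^2/(2*s^2)))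
        + (Real.sqrt (s^2) / Real.sqrt (2 * Real.pi)) *
          (a * (Real.exp (-a^2/(2*s^2)) * (a^2/(2*(s^2)^2)))
            + b * (Real.exp (-b^2/(2*s^2)) * (b^2/(2*(s^2)^2))))) (s^2) :=
    ((Real.hasDerivAt_sqrt hv.ne').div_const _).mul
      (((hasDerivAt_expterm a hv).const_mul a).add ((hasDerivAt_expterm b hv).const_mul b))
  have total := (((hasDerivAt_id (s^2)).add hTa).add hTb).sub hE
  refine total.congr_deriv ?_
  rw [hss]
  have hexp : ∀ c : ℝ, phiG (c / s) = (Real.sqrt (2 * Real.pi))⁻¹ * Real.exp (-c^2/(2*s^2)) := by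
    intro c
    rw [phiG_def, show -(c/s)^2/2 = -c^2/(2*s^2) by rw [div_pow]; ring]
  rw [hexp a, hexp b]
  have hpi : Real.sqrt (2 * Real.pi) ≠ 0 := by positivity
  field_simp
  ring

/-- The derivative function of `PsiPAM`. -/
noncomputable def DPsi (M : ℕ) (v : ℝ) : ℝ :=
  (2 / (M:ℝ)) * ∑ k ∈ Finset.Icc 1 (M / 2),
    (1 - rQ ((M:ℝ) - 1 - (2 * (k:ℝ) - 1)) v - rQ ((M:ℝ) - 1 + (2 * (k:ℝ) - 1)) v)

lemma hasDerivAt_PsiPAM (M : ℕ) {v : ℝ} (hv : 0 < v) :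
    HasDerivAt (PsiPAM M) (DPsi M v) v := by
  unfold PsiPAM DPsi
  exact HasDerivAt.const_mul _ (HasDerivAt.fun_sum fun k _ =>
    hasDerivAt_bracket ((M:ℝ) - 1 - (2 * (k:ℝ) - 1)) ((M:ℝ) - 1 + (2 * (k:ℝ) - 1)) hv)

lemma cast_half {M : ℕ} (hMe : Even M) : ((M / 2 : ℕ) : ℝ) = (M:ℝ) / 2 := by
  obtain ⟨r, rfl⟩ := hMe
  have : r + r = 2 * r := by ring
  rw [this]
  push_cast [Nat.mul_div_cancel_left r (by norm_num : 0 < 2)]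
  ring

lemma sumL {M : ℕ} (hM : 2 ≤ M) :
    ∑ k ∈ Finset.Icc 1 (M / 2), (if k = M / 2 then (1/2 : ℝ) else 1)
      = ((M / 2 : ℕ) : ℝ) - 1/2 := by
  have hm1 : 1 ≤ M / 2 := Nat.one_le_div_iff (by norm_num) |>.2 hM
  have hmem : M / 2 ∈ Finset.Icc 1 (M / 2) := Finset.mem_Icc.2 ⟨hm1, le_rfl⟩
  rw [← Finset.add_sum_erase _ _ hmem, if_pos rfl]
  have h2 : ∑ k ∈ (Finset.Icc 1 (M / 2)).erase (M / 2),
      (if k = M / 2 then (1/2 : ℝ) else 1) = ((M / 2 - 1 : ℕ) : ℝ) := by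
    rw [Finset.sum_congr rfl (fun k hk => if_neg (Finset.ne_of_mem_erase hk)),
      Finset.sum_const, Finset.card_erase_of_mem hmem, Nat.card_Icc]
    simp
  rw [h2, Nat.cast_sub hm1]
  push_cast
  ring

lemma DPsi_le {M : ℕ} (hM : 2 ≤ M) (hMe : Even M) {v : ℝ} (hv : 0 < v) :
    DPsi M v ≤ 1 - 1 / (M:ℝ) := by
  have hM0 : (0:ℝ) < (M:ℝ) := by exact_mod_cast Nat.lt_of_lt_of_le (by norm_num) hM
  have hbound : ∑ k ∈ Finset.Icc 1 (M / 2),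
      (1 - rQ ((M:ℝ) - 1 - (2 * (k:ℝ) - 1)) v - rQ ((M:ℝ) - 1 + (2 * (k:ℝ) - 1)) v)
      ≤ ∑ k ∈ Finset.Icc 1 (M / 2), (if k = M / 2 then (1/2 : ℝ) else 1) := by
    apply Finset.sum_le_sum
    intro k hk
    obtain ⟨hk1, hk2⟩ := Finset.mem_Icc.1 hk
    have hb : (0:ℝ) ≤ (M:ℝ) - 1 + (2 * (k:ℝ) - 1) := by
      have : (1:ℝ) ≤ (k:ℝ) := by exact_mod_cast hk1
      have : (2:ℝ) ≤ (M:ℝ) := by exact_mod_cast hM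
      nlinarith [show (1:ℝ) ≤ (k:ℝ) from by exact_mod_cast hk1]
    have ha : (0:ℝ) ≤ (M:ℝ) - 1 - (2 * (k:ℝ) - 1) := by
      have h2k : 2 * k ≤ M := by
        obtain ⟨r, hr⟩ := hMe
        omega
      have : ((2 * k : ℕ) : ℝ) ≤ (M:ℝ) := by exact_mod_cast h2k
      push_cast at this
      linarith
    by_cases hkm : k = M / 2
    · subst hkm
      have ha0 : (M:ℝ) - 1 - (2 * ((M/2 : ℕ):ℝ) - 1) = 0 := by
        rw [cast_half hMe]; ring
      rw [if_pos rfl, ha0, rQ_zero]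
      have := rQ_nonneg hb v
      linarith
    · rw [if_neg hkm]
      have h1 := rQ_nonneg ha v
      have h2 := rQ_nonneg hb v
      linarith
  have hsum := sumL hM
  have key : DPsi M v ≤ (2 / (M:ℝ)) * (((M / 2 : ℕ) : ℝ) - 1/2) := by
    rw [← hsum]
    exact mul_le_mul_of_nonneg_left hbound (by positivity)
  calc DPsi M v ≤ (2 / (M:ℝ)) * (((M / 2 : ℕ) : ℝ) - 1/2) := key
    _ = 1 - 1 / (M:ℝ) := by rw [cast_half hMe]; field_simp

lemma tendsto_DPsi {M : ℕ} (hM : 2 ≤ M) (hMe : Even M) :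
    Tendsto (DPsi M) (𝓝[>](0:ℝ)) (𝓝 (1 - 1 / (M:ℝ))) := by
  have hM0 : (0:ℝ) < (M:ℝ) := by exact_mod_cast Nat.lt_of_lt_of_le (by norm_num) hM
  have hsum : Tendsto (fun v => ∑ k ∈ Finset.Icc 1 (M / 2),
      (1 - rQ ((M:ℝ) - 1 - (2 * (k:ℝ) - 1)) v - rQ ((M:ℝ) - 1 + (2 * (k:ℝ) - 1)) v))
      (𝓝[>](0:ℝ)) (𝓝 (∑ k ∈ Finset.Icc 1 (M / 2), (if k = M / 2 then (1/2 : ℝ) else 1))) := by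
    apply tendsto_finset_sum
    intro k hk
    obtain ⟨hk1, hk2⟩ := Finset.mem_Icc.1 hk
    have hb : (0:ℝ) < (M:ℝ) - 1 + (2 * (k:ℝ) - 1) := by
      have h1 : (1:ℝ) ≤ (k:ℝ) := by exact_mod_cast hk1
      have h2 : (2:ℝ) ≤ (M:ℝ) := by exact_mod_cast hM
      nlinarith
    have htb := tendsto_rQ hb
    by_cases hkm : k = M / 2
    · subst hkm
      have ha0 : (M:ℝ) - 1 - (2 * ((M/2 : ℕ):ℝ) - 1) = 0 := by
        rw [cast_half hMe]; ring
      rw [if_pos rfl]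
      have : Tendsto (fun v => 1 - rQ ((M:ℝ) - 1 - (2 * ((M/2:ℕ):ℝ) - 1)) v
          - rQ ((M:ℝ) - 1 + (2 * ((M/2:ℕ):ℝ) - 1)) v) (𝓝[>](0:ℝ)) (𝓝 (1 - 1/2 - 0)) := by
        simp_rw [ha0, rQ_zero]
        exact (tendsto_const_nhds).sub htb
      convert this using 2
      norm_num
    · rw [if_neg hkm]
      have ha : (0:ℝ) < (M:ℝ) - 1 - (2 * (k:ℝ) - 1) := by
        have h2k : 2 * k < M := by
          obtain ⟨r, hr⟩ := hMe
          omega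
        have : ((2 * k : ℕ) : ℝ) < (M:ℝ) := by exact_mod_cast h2k
        push_cast at this
        linarith
      have hta := tendsto_rQ ha
      have : Tendsto (fun v => 1 - rQ ((M:ℝ) - 1 - (2 * (k:ℝ) - 1)) v
          - rQ ((M:ℝ) - 1 + (2 * (k:ℝ) - 1)) v) (𝓝[>](0:ℝ)) (𝓝 (1 - 0 - 0)) :=
        ((tendsto_const_nhds).sub hta).sub htb
      simpa using this
  have h2 := hsum.const_mul (2 / (M:ℝ))
  rw [sumL hM, show (2 / (M:ℝ)) * (((M / 2 : ℕ) : ℝ) - 1/2) = 1 - 1/(M:ℝ) by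
    rw [cast_half hMe]; field_simp] at h2
  unfold DPsi
  exact h2

/-- The derivative of `Ψ^PAM` in `σ²` is bounded by `1 − 1/M`, with supremum
`1 − 1/M` attained in the limit `σ² → 0`; hence the minimum recovery threshold
is `β^min = (1 − 1/M)⁻¹ = M/(M−1)`. -/
theorem psi_pam_deriv_sup (M : ℕ) (hM : 2 ≤ M) (hMe : Even M) :
    IsLUB (deriv (PsiPAM M) '' Ioi 0) (1 - 1 / (M:ℝ)) ∧
    ((1:ℝ) - 1 / (M:ℝ))⁻¹ = (M:ℝ) / ((M:ℝ) - 1) := by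
  have hM0 : (0:ℝ) < (M:ℝ) := by exact_mod_cast Nat.lt_of_lt_of_le (by norm_num) hM
  constructor
  · constructor
    · rintro x ⟨v, hv, rfl⟩
      rw [(hasDerivAt_PsiPAM M hv).deriv]
      exact DPsi_le hM hMe hv
    · intro b hb
      refine le_of_tendsto (tendsto_DPsi hM hMe) ?_
      filter_upwards [self_mem_nhdsWithin] with v hv
      have hmem : deriv (PsiPAM M) v ∈ deriv (PsiPAM M) '' Ioi 0 := ⟨v, hv, rfl⟩
      have := hb hmem
      rwa [(hasDerivAt_PsiPAM M hv).deriv] at this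
  · have hM1 : (M:ℝ) - 1 ≠ 0 := by
      have : (2:ℝ) ≤ (M:ℝ) := by exact_mod_cast hM
      linarith
    rw [show (1:ℝ) - 1 / (M:ℝ) = ((M:ℝ) - 1) / (M:ℝ) by field_simp, inv_div]
end

section
/- Let ν₋(r,τ) = (e^{−(r+α)²/(2τ)} − e^{−(r−α)²/(2τ)})/(√(2πτ)(Φ((r+α)/√τ) − Φ((r−α)/√τ))) and F(r,τ) = r + τ·ν₋(r,τ) be the posterior mean of a uniform prior on [−α,α] observed through Gaussian noise of variance τ. Then for each fixed r ∈ ℝ, lim_{τ→0⁺} F(r,τ) = r + sign(r)·min{α − |r|, 0}; i.e., the posterior mean converges pointwise to the clipping function F^α(r) = max{−α, min{α, r}}. -/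
open MeasureTheory ProbabilityTheory Filter

/-- Standard Gaussian CDF `Φ`. -/
noncomputable def gaussPhi (x : ℝ) : ℝ := ((gaussianReal 0 1) (Set.Iic x)).toReal

open Real in
lemma numInt (τ a b : ℝ) (hτ : 0 < τ) :
    ∫ s in b..a, (-s) * rexp (-s^2/(2*τ)) = τ * (rexp (-a^2/(2*τ)) - rexp (-b^2/(2*τ))) := by
  have h : ∀ s : ℝ, HasDerivAt (fun u : ℝ => τ * rexp (-u^2/(2*τ)))
      ((-s) * rexp (-s^2/(2*τ))) s := by
    intro s
    have h1 : HasDerivAt (fun u : ℝ => -u^2/(2*τ)) (-s/τ) s := by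
      have := ((hasDerivAt_pow 2 s).neg).div_const (2*τ)
      refine this.congr_deriv ?_
      field_simp
      ring
    have := (h1.exp).const_mul τ
    refine this.congr_deriv ?_
    field_simp
  rw [intervalIntegral.integral_eq_sub_of_hasDerivAt (fun s _ => h s)
    (Continuous.intervalIntegrable (by fun_prop) _ _)]
  ring

open Real in
lemma gaussPhi_eq (x : ℝ) : gaussPhi x = ∫ t in Set.Iic x, gaussianPDFReal 0 1 t := by
  rw [gaussPhi, gaussianReal_apply_eq_integral 0 one_ne_zero, ENNReal.toReal_ofReal]
  exact setIntegral_nonneg measurableSet_Iic fun t _ => gaussianPDFReal_nonneg 0 1 t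

open Real in
lemma gaussPhi_sub (x y : ℝ) :
    gaussPhi y - gaussPhi x = ∫ t in x..y, (Real.sqrt (2*Real.pi))⁻¹ * rexp (-t^2/2) := by
  rw [gaussPhi_eq, gaussPhi_eq, intervalIntegral.integral_Iic_sub_Iic
    ((integrable_gaussianPDFReal 0 1).integrableOn) ((integrable_gaussianPDFReal 0 1).integrableOn)]
  apply intervalIntegral.integral_congr
  intro t _
  simp [gaussianPDFReal]

open Real in
lemma denInt (τ a b : ℝ) (hτ : 0 < τ) :
    Real.sqrt (2*Real.pi*τ) * (gaussPhi (a / Real.sqrt τ) - gaussPhi (b / Real.sqrt τ)) =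
      ∫ s in b..a, rexp (-s^2/(2*τ)) := by
  have hsτ : (0:ℝ) < Real.sqrt τ := Real.sqrt_pos.mpr hτ
  have h1 : (∫ s in b..a, rexp (-s^2/(2*τ)))
      = ∫ s in b..a, (fun t => rexp (-t^2/2)) (s / Real.sqrt τ) := by
    apply intervalIntegral.integral_congr
    intro s _
    simp only
    congr 1
    rw [div_pow, Real.sq_sqrt hτ.le]
    ring
  have h2 := intervalIntegral.integral_comp_div (a := b) (b := a) (fun t => rexp (-t^2/2)) hsτ.ne'
  rw [gaussPhi_sub, h1, h2, intervalIntegral.integral_const_mul, smul_eq_mul,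
    Real.sqrt_mul (by positivity : (0:ℝ) ≤ 2*Real.pi)]
  have : Real.sqrt (2*Real.pi) ≠ 0 := by positivity
  field_simp

open Real in
lemma expMulInt (k b a : ℝ) (hk : 0 < k) (hba : b ≤ a) :
    ∫ s in b..a, (s - b) * rexp (-(k*s)) ≤ rexp (-(k*b)) / k^2 := by
  have h : ∀ s : ℝ, HasDerivAt (fun u : ℝ => -(rexp (-(k*u)) * ((u - b)/k + 1/k^2)))
      ((s - b) * rexp (-(k*s))) s := by
    intro s
    have h1 : HasDerivAt (fun u : ℝ => -(k*u)) (-k) s := by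
      exact (((hasDerivAt_id s).const_mul k).neg).congr_deriv (by ring)
    have h2 : HasDerivAt (fun u : ℝ => (u - b)/k + 1/k^2) (1/k) s :=
      (((hasDerivAt_id s).sub_const b).div_const k).add_const _
    have := ((h1.exp).mul h2).neg
    refine this.congr_deriv ?_
    field_simp
    ring
  rw [intervalIntegral.integral_eq_sub_of_hasDerivAt (fun s _ => h s)
    (Continuous.intervalIntegrable (by fun_prop) _ _)]
  have hpos : 0 ≤ rexp (-(k*a)) * ((a - b)/k + 1/k^2) := by
    have h1 : 0 ≤ (a - b)/k := div_nonneg (by linarith) hk.le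
    exact mul_nonneg (Real.exp_pos _).le (add_nonneg h1 (by positivity))
  have : rexp (-(k*b)) * ((b - b)/k + 1/k^2) = rexp (-(k*b)) / k^2 := by
    field_simp
    ring
  nlinarith

open Real in
lemma ratio_tendsto_mid (b a : ℝ) (hb : b ≤ 0) (ha : 0 < a) :
    Tendsto (fun τ : ℝ =>
        (∫ s in b..a, (-s) * rexp (-s^2/(2*τ))) / (∫ s in b..a, rexp (-s^2/(2*τ))))
      (nhdsWithin 0 (Set.Ioi 0)) (nhds 0) := by
  refine squeeze_zero_norm' (a := fun τ => rexp (1/2) * Real.sqrt τ) ?_ ?_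
  · filter_upwards [Ioc_mem_nhdsGT_of_mem
      (Set.mem_Ico.mpr ⟨le_refl (0:ℝ), (by positivity : (0:ℝ) < a^2)⟩)] with τ hτ'
    obtain ⟨hτ, hτa⟩ := hτ'
    have hsτ : 0 < Real.sqrt τ := Real.sqrt_pos.mpr hτ
    have hsa : Real.sqrt τ ≤ a := by
      calc Real.sqrt τ ≤ Real.sqrt (a^2) := Real.sqrt_le_sqrt hτa
      _ = a := Real.sqrt_sq ha.le
    have hDlow : Real.sqrt τ * rexp (-(1/2)) ≤ ∫ s in b..a, rexp (-s^2/(2*τ)) := by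
      have step1 : (∫ s in (0:ℝ)..Real.sqrt τ, rexp (-s^2/(2*τ)))
          ≤ ∫ s in b..a, rexp (-s^2/(2*τ)) := by
        apply intervalIntegral.integral_mono_interval hb hsτ.le hsa
        · exact Eventually.of_forall (fun s => (Real.exp_pos _).le)
        · exact Continuous.intervalIntegrable (by fun_prop) _ _
      have step2 : (∫ _ in (0:ℝ)..Real.sqrt τ, rexp (-(1/2):ℝ))
          ≤ ∫ s in (0:ℝ)..Real.sqrt τ, rexp (-s^2/(2*τ)) := by
        apply intervalIntegral.integral_mono_on hsτ.le intervalIntegrable_const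
          (Continuous.intervalIntegrable (by fun_prop) _ _)
        intro s hs
        apply Real.exp_le_exp.mpr
        have hs2 : s^2 ≤ τ := by
          nlinarith [Real.sq_sqrt hτ.le, hs.1, hs.2]
        rw [neg_div, neg_le_neg_iff, div_le_iff₀ (by positivity)]
        linarith
      have step3 : (∫ _ in (0:ℝ)..Real.sqrt τ, rexp (-(1/2):ℝ))
          = Real.sqrt τ * rexp (-(1/2)) := by
        rw [intervalIntegral.integral_const, sub_zero, smul_eq_mul]
      linarith
    have hNbd : |∫ s in b..a, (-s) * rexp (-s^2/(2*τ))| ≤ τ := by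
      rw [numInt τ a b hτ, abs_mul, abs_of_pos hτ]
      have h1 : rexp (-a^2/(2*τ)) ≤ 1 := Real.exp_le_one_iff.mpr
        (div_nonpos_of_nonpos_of_nonneg (neg_nonpos.mpr (by positivity)) (by positivity))
      have h2 : rexp (-b^2/(2*τ)) ≤ 1 := Real.exp_le_one_iff.mpr
        (div_nonpos_of_nonpos_of_nonneg (neg_nonpos.mpr (by positivity)) (by positivity))
      have h3 : |rexp (-a^2/(2*τ)) - rexp (-b^2/(2*τ))| ≤ 1 := by
        rw [abs_sub_le_iff]
        constructor <;> nlinarith [Real.exp_pos (-a^2/(2*τ)), Real.exp_pos (-b^2/(2*τ))]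
      nlinarith
    have hDpos : 0 < ∫ s in b..a, rexp (-s^2/(2*τ)) :=
      lt_of_lt_of_le (by positivity) hDlow
    have hkey : ‖(∫ s in b..a, (-s) * rexp (-s^2/(2*τ))) / (∫ s in b..a, rexp (-s^2/(2*τ)))‖
        ≤ τ / (Real.sqrt τ * rexp (-(1/2))) := by
      rw [Real.norm_eq_abs, abs_div, abs_of_pos hDpos]
      exact div_le_div₀ hτ.le hNbd (by positivity) hDlow
    refine hkey.trans (le_of_eq ?_)
    rw [Real.exp_neg, div_eq_iff (by positivity)]
    have hss := Real.mul_self_sqrt hτ.le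
    field_simp
    nlinarith [hss, Real.exp_pos (1/2:ℝ)]
  · have h := ((continuous_const (y := rexp (1/2))).mul Real.continuous_sqrt).tendsto (0:ℝ)
    simp only [Pi.mul_apply, Real.sqrt_zero, mul_zero] at h
    exact h.mono_left nhdsWithin_le_nhds

open Real in
lemma ratio_tendsto_pos (b a : ℝ) (hb : 0 < b) (hab : b < a) :
    Tendsto (fun τ : ℝ =>
        (∫ s in b..a, (-s) * rexp (-s^2/(2*τ))) / (∫ s in b..a, rexp (-s^2/(2*τ))))
      (nhdsWithin 0 (Set.Ioi 0)) (nhds (-b)) := by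
  have main : Tendsto (fun τ : ℝ =>
      (∫ s in b..a, (-s) * rexp (-s^2/(2*τ))) / (∫ s in b..a, rexp (-s^2/(2*τ))) + b)
      (nhdsWithin 0 (Set.Ioi 0)) (nhds 0) := by
    refine squeeze_zero_norm' (a := fun τ => (rexp (b + 1/2) / b^2) * τ) ?_ ?_
    · filter_upwards [Ioc_mem_nhdsGT_of_mem
        (Set.mem_Ico.mpr ⟨le_refl (0:ℝ), (by simp [hab] : (0:ℝ) < min 1 (a - b))⟩)] with τ hτ'
      obtain ⟨hτ, hτm⟩ := hτ'
      have hτ1 : τ ≤ 1 := hτm.trans (min_le_left _ _)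
      have hτab : τ ≤ a - b := hτm.trans (min_le_right _ _)
      set E0 := rexp (-b^2/(2*τ)) with hE0
      set D := ∫ s in b..a, rexp (-s^2/(2*τ)) with hD
      set N := ∫ s in b..a, (-s) * rexp (-s^2/(2*τ)) with hN
      have hDlow : τ * (E0 * rexp (-(b + 1/2))) ≤ D := by
        have step1 : (∫ s in b..(b+τ), rexp (-s^2/(2*τ))) ≤ D := by
          apply intervalIntegral.integral_mono_interval le_rfl (by linarith) (by linarith)
          · exact Eventually.of_forall (fun s => (Real.exp_pos _).le)
          · exact Continuous.intervalIntegrable (by fun_prop) _ _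
        have step2 : (∫ _ in b..(b+τ), rexp (-(b+τ)^2/(2*τ)))
            ≤ ∫ s in b..(b+τ), rexp (-s^2/(2*τ)) := by
          apply intervalIntegral.integral_mono_on (by linarith) intervalIntegrable_const
            (Continuous.intervalIntegrable (by fun_prop) _ _)
          intro s hs
          apply Real.exp_le_exp.mpr
          rw [neg_div, neg_div, neg_le_neg_iff]
          apply (div_le_div_iff_of_pos_right (by positivity)).mpr
          nlinarith [hs.1, hs.2]
        have step3 : (∫ _ in b..(b+τ), rexp (-(b+τ)^2/(2*τ)))
            = τ * rexp (-(b+τ)^2/(2*τ)) := by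
          rw [intervalIntegral.integral_const, smul_eq_mul, add_sub_cancel_left]
        have step4 : E0 * rexp (-(b + 1/2)) ≤ rexp (-(b+τ)^2/(2*τ)) := by
          rw [hE0, ← Real.exp_add]
          apply Real.exp_le_exp.mpr
          have hdiff : -(b+τ)^2/(2*τ) = -b^2/(2*τ) - b - τ/2 := by
            field_simp
            ring
          rw [hdiff]
          linarith
        have := mul_le_mul_of_nonneg_left step4 hτ.le
        linarith
      have hE0pos : 0 < E0 := Real.exp_pos _
      have hDpos : 0 < D := lt_of_lt_of_le (by positivity) hDlow
      set P := ∫ s in b..a, (s - b) * rexp (-s^2/(2*τ)) with hP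
      have hPnn : 0 ≤ P := intervalIntegral.integral_nonneg hab.le
        (fun s hs => mul_nonneg (by linarith [hs.1]) (Real.exp_pos _).le)
      have hNb : N + b * D = -P := by
        rw [hN, hD, hP, ← intervalIntegral.integral_neg, ← intervalIntegral.integral_const_mul,
          ← intervalIntegral.integral_add (Continuous.intervalIntegrable (by fun_prop) _ _)
            (Continuous.intervalIntegrable (by fun_prop) _ _)]
        apply intervalIntegral.integral_congr
        intro s _
        simp only
        ring
      have hcomp : P ≤ rexp (b^2/(2*τ)) * ∫ s in b..a, (s - b) * rexp (-(b/τ * s)) := by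
        rw [← intervalIntegral.integral_const_mul]
        apply intervalIntegral.integral_mono_on hab.le
          (Continuous.intervalIntegrable (by fun_prop) _ _)
          (Continuous.intervalIntegrable (by fun_prop) _ _)
        intro s hs
        have h1 : rexp (-s^2/(2*τ)) ≤ rexp (b^2/(2*τ)) * rexp (-(b/τ * s)) := by
          rw [← Real.exp_add]
          apply Real.exp_le_exp.mpr
          have h2 : b^2/(2*τ) + -(b/τ * s) = (b^2 - 2*b*s)/(2*τ) := by
            field_simp
            ring
          rw [h2]
          apply (div_le_div_iff_of_pos_right (by positivity)).mpr
          nlinarith [sq_nonneg (s - b)]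
        have h3 : 0 ≤ s - b := by linarith [hs.1]
        calc (s - b) * rexp (-s^2/(2*τ)) ≤ (s - b) * (rexp (b^2/(2*τ)) * rexp (-(b/τ * s))) :=
              mul_le_mul_of_nonneg_left h1 h3
        _ = rexp (b^2/(2*τ)) * ((s - b) * rexp (-(b/τ * s))) := by ring
      have hexp : (∫ s in b..a, (s - b) * rexp (-(b/τ * s))) ≤ rexp (-(b/τ * b)) / (b/τ)^2 :=
        expMulInt (b/τ) b a (by positivity) hab.le
      have hU : rexp (b^2/(2*τ)) * (rexp (-(b/τ * b)) / (b/τ)^2) = E0 * (τ^2/b^2) := by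
        rw [hE0]
        rw [show rexp (-b^2/(2*τ)) = rexp (b^2/(2*τ) + -(b/τ*b)) by congr 1; field_simp; ring]
        rw [Real.exp_add]
        field_simp
      have hPU : P ≤ E0 * (τ^2/b^2) := by
        rw [← hU]
        calc P ≤ rexp (b^2/(2*τ)) * ∫ s in b..a, (s - b) * rexp (-(b/τ * s)) := hcomp
        _ ≤ rexp (b^2/(2*τ)) * (rexp (-(b/τ * b)) / (b/τ)^2) := by
              apply mul_le_mul_of_nonneg_left hexp (Real.exp_pos _).le
      have heq : N / D + b = (N + b * D) / D := by
        field_simp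
      rw [heq, hNb, Real.norm_eq_abs, abs_div, abs_neg, abs_of_nonneg hPnn, abs_of_pos hDpos]
      have hquot : P / D ≤ (E0 * (τ^2/b^2)) / (τ * (E0 * rexp (-(b + 1/2)))) :=
        div_le_div₀ (by positivity) hPU (by positivity) hDlow
      refine hquot.trans (le_of_eq ?_)
      rw [Real.exp_neg]
      field_simp
    · have h := ((continuous_const (y := rexp (b + 1/2) / b^2)).mul continuous_id).tendsto (0:ℝ)
      simp only [Pi.mul_apply, mul_zero, id] at h
      exact h.mono_left nhdsWithin_le_nhds
  have h2 := main.sub (tendsto_const_nhds (x := b) (f := nhdsWithin (0:ℝ) (Set.Ioi 0)))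
  simp only [add_sub_cancel_right, zero_sub] at h2
  exact h2

open Real in
lemma ratio_reflect (b a τ : ℝ) :
    (∫ s in b..a, (-s) * rexp (-s^2/(2*τ))) / (∫ s in b..a, rexp (-s^2/(2*τ)))
      = -((∫ s in (-a)..(-b), (-s) * rexp (-s^2/(2*τ)))
          / (∫ s in (-a)..(-b), rexp (-s^2/(2*τ)))) := by
  have hD : (∫ s in b..a, rexp (-s^2/(2*τ)))
      = ∫ s in (-a)..(-b), rexp (-s^2/(2*τ)) := by
    rw [← intervalIntegral.integral_comp_neg (a := b) (b := a) (fun s => rexp (-s^2/(2*τ)))]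
    apply intervalIntegral.integral_congr
    intro s _
    simp [neg_sq]
  have hN : (∫ s in b..a, (-s) * rexp (-s^2/(2*τ)))
      = -∫ s in (-a)..(-b), (-s) * rexp (-s^2/(2*τ)) := by
    rw [← intervalIntegral.integral_comp_neg (a := b) (b := a)
      (fun s => (-s) * rexp (-s^2/(2*τ))), ← intervalIntegral.integral_neg]
    apply intervalIntegral.integral_congr
    intro s _
    simp [neg_sq]
  rw [hN, hD, neg_div]

/-- As `τ → 0⁺`, the posterior mean `F(r,τ) = r + τ ν₋(r,τ)` of the uniform
prior on `[-α,α]` converges pointwise to the clipping function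
`F^α(r) = r + sign(r) min{α − |r|, 0} = max{−α, min{α, r}}`. -/
theorem uniform_posterior_mean_clip_limit (α r : ℝ) (hα : 0 < α) :
    Tendsto
      (fun τ : ℝ => r + τ *
        ((Real.exp (-(r + α)^2 / (2 * τ)) - Real.exp (-(r - α)^2 / (2 * τ))) /
          (Real.sqrt (2 * Real.pi * τ) *
            (gaussPhi ((r + α) / Real.sqrt τ) - gaussPhi ((r - α) / Real.sqrt τ)))))
      (nhdsWithin 0 (Set.Ioi 0))
      (nhds (r + Real.sign r * min (α - |r|) 0)) ∧
    r + Real.sign r * min (α - |r|) 0 = max (-α) (min α r) := by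
  constructor
  · have hratio : Tendsto (fun τ : ℝ =>
        (∫ s in (r-α)..(r+α), (-s) * Real.exp (-s^2/(2*τ)))
          / (∫ s in (r-α)..(r+α), Real.exp (-s^2/(2*τ))))
        (nhdsWithin 0 (Set.Ioi 0)) (nhds (Real.sign r * min (α - |r|) 0)) := by
      by_cases h1 : α < r
      · have h := ratio_tendsto_pos (r - α) (r + α) (by linarith) (by linarith)
        have heq : Real.sign r * min (α - |r|) 0 = -(r - α) := by
          rw [Real.sign_of_pos (by linarith), abs_of_pos (by linarith),
            min_eq_left (by linarith)]
          ring
        rwa [heq]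
      · by_cases h2 : r < -α
        · have h := (ratio_tendsto_pos (-(r + α)) (-(r - α)) (by linarith) (by linarith)).neg
          have h' := h.congr (fun τ => (ratio_reflect (r - α) (r + α) τ).symm)
          have heq : Real.sign r * min (α - |r|) 0 = -(-(-(r + α))) := by
            rw [Real.sign_of_neg (by linarith), abs_of_neg (by linarith),
              min_eq_left (by linarith)]
            ring
          rwa [heq]
        · have hra : r ≤ α := le_of_not_gt h1
          have har : -α ≤ r := le_of_not_gt h2
          have heq : Real.sign r * min (α - |r|) 0 = 0 := by
            rw [min_eq_right (by rw [sub_nonneg]; exact abs_le.mpr ⟨har, hra⟩), mul_zero]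
          rw [heq]
          by_cases ha : 0 < r + α
          · exact ratio_tendsto_mid (r - α) (r + α) (by linarith) ha
          · have h := (ratio_tendsto_mid (-(r + α)) (-(r - α)) (by linarith) (by linarith)).neg
            have h' := h.congr (fun τ => (ratio_reflect (r - α) (r + α) τ).symm)
            simpa using h'
    have heq : ∀ᶠ τ in nhdsWithin (0:ℝ) (Set.Ioi 0),
        r + τ * ((Real.exp (-(r + α)^2 / (2 * τ)) - Real.exp (-(r - α)^2 / (2 * τ))) /
          (Real.sqrt (2 * Real.pi * τ) *
            (gaussPhi ((r + α) / Real.sqrt τ) - gaussPhi ((r - α) / Real.sqrt τ))))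
        = r + (∫ s in (r-α)..(r+α), (-s) * Real.exp (-s^2/(2*τ)))
            / (∫ s in (r-α)..(r+α), Real.exp (-s^2/(2*τ))) := by
      filter_upwards [self_mem_nhdsWithin] with τ hτ'
      have hτ : (0:ℝ) < τ := hτ'
      congr 1
      rw [mul_div_assoc', ← numInt τ (r+α) (r-α) hτ, denInt τ (r+α) (r-α) hτ]
    exact Tendsto.congr' (Filter.EventuallyEq.symm heq) (hratio.const_add r)
  · by_cases h1 : α < r
    · rw [Real.sign_of_pos (by linarith), abs_of_pos (by linarith),
        min_eq_left (by linarith), min_eq_left h1.le, max_eq_right (by linarith)]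
      ring
    · by_cases h2 : r < -α
      · rw [Real.sign_of_neg (by linarith), abs_of_neg (by linarith),
          min_eq_left (by linarith), min_eq_right (by linarith),
          max_eq_left (by linarith)]
        ring
      · have hra : r ≤ α := le_of_not_gt h1
        have har : -α ≤ r := le_of_not_gt h2
        rw [min_eq_right (by rw [sub_nonneg]; exact abs_le.mpr ⟨har, hra⟩), mul_zero,
          min_eq_right hra, max_eq_right har, add_zero]
end
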